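/- Mischaracterization probability: Suppose the rate-function family satisfies the growth conditions (G1) and (G2), I_θ(0) = 0 for all θ ∈ Θ, J : Θ → ℝ is uniformly continuous on bounded subsets of Θ, and assume each J̄^δ_{T,r} and J̲^δ_{T,r} is Borel measurable. Fix r > 0, δ > 0 and θ0 ∈ Θ, and assume the LDP lower bound at θ0. Then for every θ̃0 ∈ Θ with J(θ̃0) > J(θ0), lim_{T→∞} (1/b_T) log P_{θ0}(J(θ̃0) > J̄^δ_{T,r}(θ̂_T)) = 0, and for every θ̃0 ∈ Θ with J(θ̃0) < J(θ0), lim_{T→∞} (1/b_T) log P_{θ0}(J(θ̃0) < J̲^δ_{T,r}(θ̂_T)) = 0. -/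

import Mathlib

set_option autoImplicit false

open Filter Topology Metric Set MeasureTheory

noncomputable section

variable {E : Type*} [NormedAddCommGroup E] [NormedSpace ℝ E]

/-- The sublevel set `S_{θ,r} = {ϑ ∈ E : I_θ(ϑ) ≤ r}` of the rate function. -/
def sublevelSet (I : E → E → ENNReal) (θ : E) (r : ℝ) : Set E :=
  {ϑ : E | I θ ϑ ≤ ENNReal.ofReal r}

/-- The open `δ`-fattening `S^δ_{θ,r}` of the sublevel set, where `S^0_{θ,r} = S_{θ,r}`;
for `δ > 0` it is the set of points at distance `< δ` from `S_{θ,r}`, i.e. the union of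
open balls of radius `δ` around points of `S_{θ,r}`. -/
def fatSublevel (I : E → E → ENNReal) (θ : E) (r δ : ℝ) : Set E :=
  if δ = 0 then sublevelSet I θ r
  else ⋃ ϑ ∈ sublevelSet I θ r, Metric.ball ϑ δ

/-- Growth condition (G1): for sequences `θ_n ∈ Θ` with `sup_n ‖θ_n‖ < ∞` and
`‖ϑ_n‖ → ∞`, `I_{θ_n}(ϑ_n) → ∞`. -/
def GrowthG1 (Θ : Set E) (I : E → E → ENNReal) : Prop :=
  ∀ θs ϑs : ℕ → E, (∀ n, θs n ∈ Θ) → (∃ C : ℝ, ∀ n, ‖θs n‖ ≤ C) →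
    Tendsto (fun n => ‖ϑs n‖) atTop atTop →
    Tendsto (fun n => I (θs n) (ϑs n)) atTop (nhds ⊤)

/-- Growth condition (G2): for sequences `θ_n ∈ Θ` with `‖θ_n‖ → ∞` and
`‖ϑ_n‖/‖θ_n‖ → ∞`, `limsup_n I_{θ_n}(ϑ_n) = ∞`. -/
def GrowthG2 (Θ : Set E) (I : E → E → ENNReal) : Prop :=
  ∀ θs ϑs : ℕ → E, (∀ n, θs n ∈ Θ) →
    Tendsto (fun n => ‖θs n‖) atTop atTop →
    Tendsto (fun n => ‖ϑs n‖ / ‖θs n‖) atTop atTop →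
    Filter.limsup (fun n => I (θs n) (ϑs n)) atTop = ⊤

/-- The upper confidence bound `J̄^δ_{T,r}(θ') = sup {J(θ) : θ ∈ Θ, a_T (θ' - θ) ∈ S^δ_{θ,r}}`. -/
def upperCB (Θ : Set E) (I : E → E → ENNReal) (J : E → ℝ) (r δ : ℝ) (a : ℝ → ℝ)
    (T : ℝ) (θ' : E) : ℝ :=
  sSup (J '' {θ : E | θ ∈ Θ ∧ a T • (θ' - θ) ∈ fatSublevel I θ r δ})

/-- The lower confidence bound `J̲^δ_{T,r}(θ') = inf {J(θ) : θ ∈ Θ, a_T (θ' - θ) ∈ S^δ_{θ,r}}`. -/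
def lowerCB (Θ : Set E) (I : E → E → ENNReal) (J : E → ℝ) (r δ : ℝ) (a : ℝ → ℝ)
    (T : ℝ) (θ' : E) : ℝ :=
  sInf (J '' {θ : E | θ ∈ Θ ∧ a T • (θ' - θ) ∈ fatSublevel I θ r δ})

variable {Ω : Type*} [MeasurableSpace Ω]

/-- LDP lower bound at `θ0` for the family `a_T (θ̂_T − θ0)` with speed `b_T`:
for every open `G ⊆ E`,
`liminf_{T→∞} (1/b_T) log P(a_T(θ̂_T − θ0) ∈ G) ≥ − inf_{ϑ ∈ G} I(ϑ)`. -/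
def LDPLowerAt (P : Measure Ω) (θhat : ℝ → Ω → E) (a b : ℝ → ℝ)
    (Irate : E → ENNReal) (θ0 : E) : Prop :=
  ∀ G : Set E, IsOpen G →
    -(((⨅ ϑ ∈ G, Irate ϑ) : ENNReal) : EReal) ≤
      Filter.liminf
        (fun T => (((b T)⁻¹ : ℝ) : EReal) *
          ENNReal.log (P {ω | a T • (θhat T ω - θ0) ∈ G})) atTop

/-- LDP upper bound at `θ0` for the family `a_T (θ̂_T − θ0)` with speed `b_T`:
for every closed `F ⊆ E`,
`limsup_{T→∞} (1/b_T) log P(a_T(θ̂_T − θ0) ∈ F) ≤ − inf_{ϑ ∈ F} I(ϑ)`. -/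
def LDPUpperAt (P : Measure Ω) (θhat : ℝ → Ω → E) (a b : ℝ → ℝ)
    (Irate : E → ENNReal) (θ0 : E) : Prop :=
  ∀ F : Set E, IsClosed F →
    Filter.limsup
      (fun T => (((b T)⁻¹ : ℝ) : EReal) *
        ENNReal.log (P {ω | a T • (θhat T ω - θ0) ∈ F})) atTop ≤
      -(((⨅ ϑ ∈ F, Irate ϑ) : ENNReal) : EReal)


lemma aux_G1 {Θ : Set E} {I : E → E → ENNReal} (hG1 : GrowthG1 Θ I) (r C : ℝ) :
    ∃ M : ℝ, ∀ θ ∈ Θ, ‖θ‖ ≤ C → ∀ ϑ, I θ ϑ ≤ ENNReal.ofReal r → ‖ϑ‖ ≤ M := by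
  by_contra h
  push_neg at h
  choose θs hθΘ hθC ϑs hIr hϑ using fun n : ℕ => h n
  have h1 : Tendsto (fun n => ‖ϑs n‖) atTop atTop :=
    tendsto_atTop_mono (fun n => (hϑ n).le) tendsto_natCast_atTop_atTop
  have h2 := hG1 θs ϑs hθΘ ⟨C, hθC⟩ h1
  have h3 : ∀ᶠ n in atTop, ENNReal.ofReal r < I (θs n) (ϑs n) :=
    h2.eventually (eventually_gt_nhds ENNReal.ofReal_lt_top)
  obtain ⟨n, hn⟩ := h3.exists
  exact hn.not_ge (hIr n)

lemma aux_G2 {Θ : Set E} {I : E → E → ENNReal} (hG2 : GrowthG2 Θ I) (r : ℝ) :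
    ∃ C K : ℝ, 1 ≤ K ∧ ∀ θ ∈ Θ, C ≤ ‖θ‖ → ∀ ϑ, I θ ϑ ≤ ENNReal.ofReal r → ‖ϑ‖ ≤ K * ‖θ‖ := by
  by_contra h
  push_neg at h
  have h' : ∀ n : ℕ, ∃ θ ∈ Θ, ((n : ℝ) + 1) ≤ ‖θ‖ ∧
      ∃ ϑ, I θ ϑ ≤ ENNReal.ofReal r ∧ ((n : ℝ) + 1) * ‖θ‖ < ‖ϑ‖ := by
    intro n
    obtain ⟨θ, hθΘ, hθn, ϑ, hIr, hϑ⟩ := h ((n : ℝ) + 1) ((n : ℝ) + 1)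
      (by have := Nat.cast_nonneg (α := ℝ) n; linarith)
    exact ⟨θ, hθΘ, hθn, ϑ, hIr, hϑ⟩
  choose θs hθΘ hθn ϑs hIr hϑ using h'
  have hθpos : ∀ n, (0 : ℝ) < ‖θs n‖ := fun n => lt_of_lt_of_le (by positivity) (hθn n)
  have h1 : Tendsto (fun n => ‖θs n‖) atTop atTop :=
    tendsto_atTop_mono (fun n => le_trans (by linarith) (hθn n)) tendsto_natCast_atTop_atTop
  have h2 : Tendsto (fun n => ‖ϑs n‖ / ‖θs n‖) atTop atTop := by
    refine tendsto_atTop_mono (fun n => ?_) tendsto_natCast_atTop_atTop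
    rw [le_div_iff₀ (hθpos n)]
    nlinarith [hϑ n, hθpos n]
  have h3 := hG2 θs ϑs hθΘ h1 h2
  have h4 : Filter.limsup (fun n => I (θs n) (ϑs n)) atTop ≤ ENNReal.ofReal r :=
    Filter.limsup_le_of_le (by isBoundedDefault) (Filter.Eventually.of_forall hIr)
  rw [h3] at h4
  exact (lt_irrefl _ (lt_of_le_of_lt h4 ENNReal.ofReal_lt_top))

lemma key_close {Θ : Set E} {I : E → E → ENNReal} {J : E → ℝ}
    (hG1 : GrowthG1 Θ I) (hG2 : GrowthG2 Θ I)
    (hJ : ∀ a0 > (0 : ℝ), ∀ θ0 ∈ Θ, UniformContinuousOn J (Metric.closedBall θ0 a0 ∩ Θ))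
    {r δ : ℝ} (hδ : 0 < δ) {θ0 : E} (hθ0 : θ0 ∈ Θ)
    {a : ℝ → ℝ} (hatop : Tendsto a atTop atTop)
    {ε : ℝ} (hε : 0 < ε) :
    ∀ᶠ T in atTop, ∀ θ' : E, ‖a T • (θ' - θ0)‖ < min δ 1 →
      ∀ θ ∈ Θ, a T • (θ' - θ) ∈ fatSublevel I θ r δ → |J θ - J θ0| < ε := by
  obtain ⟨C, K, hK1, hB⟩ := aux_G2 hG2 r
  set C0 : ℝ := max C (2 * ‖θ0‖ + δ + 1) with hC0def
  obtain ⟨M, hM⟩ := aux_G1 hG1 r C0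
  obtain ⟨η, hη, hu⟩ := (Metric.uniformContinuousOn_iff.mp (hJ 1 one_pos θ0 hθ0)) ε hε
  set m : ℝ := min η 1 with hmdef
  have hm : 0 < m := lt_min hη one_pos
  set A0 : ℝ := max (max (2 * K) 2) ((M + δ + 1) / m + 1) with hA0def
  filter_upwards [hatop.eventually_ge_atTop A0] with T hT
  intro θ' hθ' θ hθΘ hmem
  set aT : ℝ := a T with haTdef
  have haT2 : 2 ≤ aT := le_trans (le_trans (le_max_right _ _) (le_max_left _ _)) hT
  have haT2K : 2 * K ≤ aT := le_trans (le_trans (le_max_left _ _) (le_max_left _ _)) hT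
  have haTQ : (M + δ + 1) / m + 1 ≤ aT := le_trans (le_max_right _ _) hT
  have haTpos : 0 < aT := by linarith
  rw [fatSublevel, if_neg hδ.ne'] at hmem
  simp only [mem_iUnion, Metric.mem_ball, exists_prop] at hmem
  obtain ⟨ϑ, hϑr, hdist⟩ := hmem
  have hϑr' : I θ ϑ ≤ ENNReal.ofReal r := hϑr
  rw [dist_eq_norm] at hdist
  have hn0 : aT * ‖θ' - θ0‖ < 1 := by
    have : ‖aT • (θ' - θ0)‖ = aT * ‖θ' - θ0‖ := by
      rw [norm_smul, Real.norm_eq_abs, abs_of_pos haTpos]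
    rw [this] at hθ'
    exact lt_of_lt_of_le hθ' (min_le_right _ _)
  have hsmul : ‖aT • (θ' - θ)‖ = aT * ‖θ' - θ‖ := by
    rw [norm_smul, Real.norm_eq_abs, abs_of_pos haTpos]
  have htri : aT * ‖θ' - θ‖ ≤ ‖aT • (θ' - θ) - ϑ‖ + ‖ϑ‖ := by
    rw [← hsmul]
    calc ‖aT • (θ' - θ)‖ = ‖(aT • (θ' - θ) - ϑ) + ϑ‖ := by rw [sub_add_cancel]
      _ ≤ ‖aT • (θ' - θ) - ϑ‖ + ‖ϑ‖ := norm_add_le _ _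
  have htri2 : aT * ‖θ - θ0‖ ≤ aT * ‖θ' - θ‖ + aT * ‖θ' - θ0‖ := by
    have : ‖θ - θ0‖ ≤ ‖θ' - θ‖ + ‖θ' - θ0‖ := by
      calc ‖θ - θ0‖ = ‖(θ - θ') + (θ' - θ0)‖ := by rw [sub_add_sub_cancel]
        _ ≤ ‖θ - θ'‖ + ‖θ' - θ0‖ := norm_add_le _ _
        _ = ‖θ' - θ‖ + ‖θ' - θ0‖ := by rw [norm_sub_rev]
    nlinarith [norm_nonneg (θ - θ0)]
  by_cases hcase : ‖θ‖ ≤ C0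
  · have hMb : ‖ϑ‖ ≤ M := hM θ hθΘ hcase ϑ hϑr'
    have h5 : aT * ‖θ - θ0‖ < M + δ + 1 := by linarith
    have h6 : ‖θ - θ0‖ < m := by
      by_contra hge
      push_neg at hge
      have t1 : aT * m ≤ aT * ‖θ - θ0‖ := mul_le_mul_of_nonneg_left hge haTpos.le
      have t2 : ((M + δ + 1) / m + 1) * m ≤ aT * m :=
        mul_le_mul_of_nonneg_right haTQ hm.le
      have t3 : ((M + δ + 1) / m + 1) * m = (M + δ + 1) + m := by
        field_simp
      nlinarith
    have hθball : θ ∈ Metric.closedBall θ0 1 ∩ Θ := by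
      constructor
      · rw [Metric.mem_closedBall, dist_eq_norm]
        have : m ≤ 1 := min_le_right _ _
        linarith
      · exact hθΘ
    have hθ0ball : θ0 ∈ Metric.closedBall θ0 1 ∩ Θ :=
      ⟨Metric.mem_closedBall_self one_pos.le, hθ0⟩
    have := hu θ hθball θ0 hθ0ball (by rw [dist_eq_norm]; exact lt_of_lt_of_le h6 (min_le_left _ _))
    rwa [Real.dist_eq] at this
  · exfalso
    push_neg at hcase
    have hC : C ≤ ‖θ‖ := le_trans (le_max_left _ _) hcase.le
    have hKb : ‖ϑ‖ ≤ K * ‖θ‖ := hB θ hθΘ hC ϑ hϑr'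
    have h7 : aT * ‖θ - θ0‖ < K * ‖θ‖ + δ + 1 := by linarith
    have t1 : 2 * K * (‖θ‖ - ‖θ0‖) ≤ 2 * K * ‖θ - θ0‖ :=
      mul_le_mul_of_nonneg_left (norm_sub_norm_le θ θ0) (by linarith)
    have t2 : 2 * K * ‖θ - θ0‖ ≤ aT * ‖θ - θ0‖ :=
      mul_le_mul_of_nonneg_right haT2K (norm_nonneg _)
    have t4 : 2 * ‖θ0‖ + δ + 1 < ‖θ‖ := lt_of_le_of_lt (le_max_right _ _) hcase
    nlinarith [norm_nonneg θ0, norm_nonneg θ]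

lemma ereal_tendsto_zero {f : ℝ → EReal} (h1 : ∀ᶠ T in atTop, f T ≤ 0)
    (h2 : 0 ≤ Filter.liminf f atTop) : Tendsto f atTop (nhds 0) :=
  tendsto_of_le_liminf_of_limsup_le h2 (Filter.limsup_le_of_le (by isBoundedDefault) h1)

/-- mischaracterization probability: for every `θ̃0` with
`J(θ̃0) > J(θ0)`, the probability `P_{θ0}(J(θ̃0) > J̄^δ_{T,r}(θ̂_T))` does not decay
exponentially: `(1/b_T) log P_{θ0}(J(θ̃0) > J̄^δ_{T,r}(θ̂_T)) → 0`; symmetrically for the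
lower bound. -/
theorem stmt13 (Θ : Set E) (hΘ : Θ.Nonempty) (I : E → E → ENNReal) (J : E → ℝ)
    [MeasurableSpace E] [BorelSpace E]
    (P : E → Measure Ω) (hP : ∀ θ, IsProbabilityMeasure (P θ))
    (θhat : ℝ → Ω → E) (hθhatmeas : ∀ T, Measurable (θhat T))
    (b a : ℝ → ℝ) (hbpos : ∀ T, 0 < b T) (hbtop : Tendsto b atTop atTop)
    (hadef : ∀ T, a T = Real.sqrt (T / b T)) (hatop : Tendsto a atTop atTop)
    (hG1 : GrowthG1 Θ I) (hG2 : GrowthG2 Θ I)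
    (hI0 : ∀ θ ∈ Θ, I θ 0 = 0)
    (hJ : ∀ a0 > (0 : ℝ), ∀ θ0 ∈ Θ, UniformContinuousOn J (Metric.closedBall θ0 a0 ∩ Θ))
    (r δ : ℝ) (hr : 0 < r) (hδ : 0 < δ)
    (hmeasU : ∀ T, Measurable (upperCB Θ I J r δ a T))
    (hmeasL : ∀ T, Measurable (lowerCB Θ I J r δ a T))
    (θ0 : E) (hθ0 : θ0 ∈ Θ)
    (hLDPlow : LDPLowerAt (P θ0) θhat a b (I θ0) θ0) :
    (∀ θt0 ∈ Θ, J θ0 < J θt0 →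
      Tendsto
        (fun T => (((b T)⁻¹ : ℝ) : EReal) *
          ENNReal.log (P θ0 {ω | upperCB Θ I J r δ a T (θhat T ω) < J θt0}))
        atTop (nhds 0)) ∧
    (∀ θt0 ∈ Θ, J θt0 < J θ0 →
      Tendsto
        (fun T => (((b T)⁻¹ : ℝ) : EReal) *
          ENNReal.log (P θ0 {ω | J θt0 < lowerCB Θ I J r δ a T (θhat T ω)}))
        atTop (nhds 0)) := by
  
  classical
  have hprob := hP θ0
  set G : Set E := Metric.ball (0 : E) (min δ 1) with hGdef
  have hGopen : IsOpen G := Metric.isOpen_ball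
  have hinf0 : (⨅ ϑ ∈ G, I θ0 ϑ) = 0 := by
    refine le_antisymm ?_ zero_le
    have h0 : (0 : E) ∈ G := Metric.mem_ball_self (lt_min hδ one_pos)
    have h1 := iInf₂_le (f := fun (ϑ : E) (_ : ϑ ∈ G) => I θ0 ϑ) 0 h0
    rwa [hI0 θ0 hθ0] at h1
  have hLDP : (0 : EReal) ≤ Filter.liminf
      (fun T => (((b T)⁻¹ : ℝ) : EReal) *
        ENNReal.log (P θ0 {ω | a T • (θhat T ω - θ0) ∈ G})) atTop := by
    have h := hLDPlow G hGopen
    rw [hinf0] at h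
    simpa using h
  have hcnn : ∀ T, (0 : EReal) ≤ (((b T)⁻¹ : ℝ) : EReal) := by
    intro T
    exact_mod_cast inv_nonneg.mpr (hbpos T).le
  have hnonpos : ∀ (s : ℝ → Set Ω), ∀ᶠ T in atTop,
      (((b T)⁻¹ : ℝ) : EReal) * ENNReal.log (P θ0 (s T)) ≤ 0 := by
    intro s
    refine Eventually.of_forall fun T => ?_
    have hl : ENNReal.log (P θ0 (s T)) ≤ 0 :=
      ENNReal.log_le_zero_iff.mpr prob_le_one
    exact mul_nonpos_of_nonneg_of_nonpos (hcnn T) hl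
  constructor
  · intro θt0 hθt0 hlt
    set ε : ℝ := (J θt0 - J θ0) / 2 with hεdef
    have hε : 0 < ε := by rw [hεdef]; linarith
    have hkey := key_close hG1 hG2 hJ (r := r) hδ hθ0 hatop hε
    have hsub : ∀ᶠ T in atTop,
        {ω | a T • (θhat T ω - θ0) ∈ G} ⊆
        {ω | upperCB Θ I J r δ a T (θhat T ω) < J θt0} := by
      filter_upwards [hkey] with T hT
      intro ω hω
      simp only [Set.mem_setOf_eq, hGdef, mem_ball_zero_iff] at hω
      set θ' := θhat T ω with hθ'def
      have hfat0 : a T • (θ' - θ0) ∈ fatSublevel I θ0 r δ := by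
        rw [fatSublevel, if_neg hδ.ne']
        simp only [Set.mem_iUnion, Metric.mem_ball, exists_prop]
        refine ⟨0, ?_, ?_⟩
        · show I θ0 0 ≤ ENNReal.ofReal r
          rw [hI0 θ0 hθ0]; exact zero_le
        · rw [dist_eq_norm, sub_zero]
          exact hω.trans_le (min_le_left _ _)
      have hne : (J '' {θ : E | θ ∈ Θ ∧ a T • (θ' - θ) ∈ fatSublevel I θ r δ}).Nonempty :=
        ⟨J θ0, θ0, ⟨hθ0, hfat0⟩, rfl⟩
      have hub : ∀ x ∈ J '' {θ : E | θ ∈ Θ ∧ a T • (θ' - θ) ∈ fatSublevel I θ r δ},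
          x ≤ J θ0 + ε := by
        rintro x ⟨θ, ⟨hθΘ, hfat⟩, rfl⟩
        have h := hT θ' hω θ hθΘ hfat
        rw [abs_lt] at h
        linarith [h.2]
      have hle := csSup_le hne hub
      show upperCB Θ I J r δ a T θ' < J θt0
      exact lt_of_le_of_lt hle (by rw [hεdef]; linarith)
    apply ereal_tendsto_zero (hnonpos _)
    refine le_trans hLDP (Filter.liminf_le_liminf ?_)
    filter_upwards [hsub] with T hT
    exact mul_le_mul_of_nonneg_left (ENNReal.log_monotone (measure_mono hT)) (hcnn T)
  · intro θt0 hθt0 hlt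
    set ε : ℝ := (J θ0 - J θt0) / 2 with hεdef
    have hε : 0 < ε := by rw [hεdef]; linarith
    have hkey := key_close hG1 hG2 hJ (r := r) hδ hθ0 hatop hε
    have hsub : ∀ᶠ T in atTop,
        {ω | a T • (θhat T ω - θ0) ∈ G} ⊆
        {ω | J θt0 < lowerCB Θ I J r δ a T (θhat T ω)} := by
      filter_upwards [hkey] with T hT
      intro ω hω
      simp only [Set.mem_setOf_eq, hGdef, mem_ball_zero_iff] at hω
      set θ' := θhat T ω with hθ'def
      have hfat0 : a T • (θ' - θ0) ∈ fatSublevel I θ0 r δ := by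
        rw [fatSublevel, if_neg hδ.ne']
        simp only [Set.mem_iUnion, Metric.mem_ball, exists_prop]
        refine ⟨0, ?_, ?_⟩
        · show I θ0 0 ≤ ENNReal.ofReal r
          rw [hI0 θ0 hθ0]; exact zero_le
        · rw [dist_eq_norm, sub_zero]
          exact hω.trans_le (min_le_left _ _)
      have hne : (J '' {θ : E | θ ∈ Θ ∧ a T • (θ' - θ) ∈ fatSublevel I θ r δ}).Nonempty :=
        ⟨J θ0, θ0, ⟨hθ0, hfat0⟩, rfl⟩
      have hlb : ∀ x ∈ J '' {θ : E | θ ∈ Θ ∧ a T • (θ' - θ) ∈ fatSublevel I θ r δ},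
          J θ0 - ε ≤ x := by
        rintro x ⟨θ, ⟨hθΘ, hfat⟩, rfl⟩
        have h := hT θ' hω θ hθΘ hfat
        rw [abs_lt] at h
        linarith [h.1]
      have hge := le_csInf hne hlb
      show J θt0 < lowerCB Θ I J r δ a T θ'
      exact lt_of_lt_of_le (by rw [hεdef]; linarith) hge
    apply ereal_tendsto_zero (hnonpos _)
    refine le_trans hLDP (Filter.liminf_le_liminf ?_)
    filter_upwards [hsub] with T hT
    exact mul_le_mul_of_nonneg_left (ENNReal.log_monotone (measure_mono hT)) (hcnn T)
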